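/- arXiv:0808.1840 — 2 statements merged into one kernel-verified Lean document; each statement's English description precedes it below -/
import Mathlib

section
/- Let G be a compact topological group and S ⊆ G a subsemigroup (closed under multiplication). Then the topological closure of S in G is a subgroup of G. In particular, for every a in the closure of S, the inverse a⁻¹ also lies in the closure of S. -/
open Filter Set

/-- In a compact (Hausdorff) topological group, the closure of a nonempty
subsemigroup is a subgroup; in particular the closure is inverse-closed. -/
theorem stmt1 {G : Type*} [Group G] [TopologicalSpace G] [IsTopologicalGroup G]
    [CompactSpace G] [T2Space G] (S : Set G) (hne : S.Nonempty)
    (hmul : ∀ x ∈ S, ∀ y ∈ S, x * y ∈ S) :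
    (∃ H : Subgroup G, (H : Set G) = closure S) ∧
      ∀ a ∈ closure S, a⁻¹ ∈ closure S := by
  obtain ⟨x, hx⟩ := hne
  -- powers of x (n ≥ 1) stay in S
  have hpow : ∀ n : ℕ, 1 ≤ n → x ^ n ∈ S := by
    intro n hn
    induction n with
    | zero => omega
    | succ k ih =>
      rcases Nat.eq_or_lt_of_le hn with h | h
      · rw [← h]; simpa using hx
      · have hk : 1 ≤ k := by omega
        rw [pow_succ]
        exact hmul _ (ih hk) _ hx
  have h1 : (1 : G) ∈ closure S := by
    have hc := mapClusterPt_one_atTop_pow x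
    rw [mem_closure_iff_clusterPt]
    refine ClusterPt.mono hc (le_principal_iff.2 ?_)
    exact Filter.mem_map.2 (Filter.mem_of_superset (Filter.mem_atTop 1) fun n hn => hpow n hn)
  -- closure S is mul-closed
  have hmulc : ∀ a ∈ closure S, ∀ b ∈ closure S, a * b ∈ closure S := by
    intro a ha b hb
    exact map_mem_closure₂ continuous_mul ha hb fun u hu v hv => hmul u hu v hv
  -- the submonoid with carrier `closure S`
  let M : Submonoid G := ⟨⟨closure S, fun {a b} ha hb => hmulc a ha b hb⟩, h1⟩
  have hmono : (Submonoid.closure S : Set G) ⊆ closure S :=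
    Submonoid.closure_le (S := M).2 subset_closure
  have hkey : closure (Subgroup.closure S : Set G) = closure S := by
    rw [← closure_submonoidClosure_eq_closure_subgroupClosure]
    exact le_antisymm (closure_minimal hmono isClosed_closure)
      (closure_mono Submonoid.subset_closure)
  refine ⟨⟨(Subgroup.closure S).topologicalClosure, hkey⟩, fun a ha => ?_⟩
  rw [← hkey] at ha ⊢
  exact ((Subgroup.closure S).topologicalClosure.inv_mem ha : _)
end

section
/- Let G be a compact connected Lie group (e.g., the unitary group U(N)) and M ∈ Lie(G). Then the closure of the one-parameter semigroup {exp(tM) : t ≥ 0} in G contains exp(tM) for all t ∈ ℝ; in particular it contains exp(-M) = exp(M)⁻¹. -/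
open NormedSpace Matrix

/-- For a skew-Hermitian matrix `M` (an element of the Lie algebra of the
compact connected Lie group `U(N)`), the closure of the one-parameter semigroup
`{exp (s M) : s ≥ 0}` contains `exp (t M)` for every real `t`; in particular it
contains `exp (-M) = exp M⁻¹`. -/
theorem stmt14 {N : ℕ} (M : Matrix (Fin N) (Fin N) ℂ) (hM : Mᴴ = -M) :
    ∀ t : ℝ, exp (t • M) ∈
      closure {X : Matrix (Fin N) (Fin N) ℂ | ∃ s : ℝ, 0 ≤ s ∧ X = exp (s • M)} := by
  intro t
  -- basic algebra of the one-parameter group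
  have key : ∀ a b : ℝ, exp ((a + b) • M) = exp (a • M) * exp (b • M) := by
    intro a b
    rw [add_smul]
    exact Matrix.exp_add_of_commute _ _ (((Commute.refl M).smul_left a).smul_right b)
  have hstar : ∀ a : ℝ, star (exp (a • M)) = exp ((-a) • M) := by
    intro a
    have : (exp (a • M))ᴴ = exp ((a • M)ᴴ) := (Matrix.exp_conjTranspose (a • M)).symm
    have h2 : (a • M)ᴴ = (-a) • M := by
      rw [Matrix.conjTranspose_smul, hM, star_trivial, neg_smul, smul_neg]
    simpa [h2, Matrix.star_eq_conjTranspose] using this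
  have hone : ∀ a : ℝ, exp (a • M) * star (exp (a • M)) = 1 := by
    intro a
    rw [hstar, ← key, add_neg_cancel, zero_smul, NormedSpace.exp_zero]
  have hunit : ∀ a : ℝ, exp (a • M) ∈ Matrix.unitaryGroup (Fin N) ℂ := by
    intro a
    constructor
    · have := hone (-a); rw [hstar] at this; simpa [hstar, neg_neg] using this
    · exact hone a
  -- the compact set containing the sequence
  set c : ℝ := |t| + 1 with hc
  have hcpos : (1 : ℝ) ≤ c := by have := abs_nonneg t; linarith
  set f : ℕ → Matrix (Fin N) (Fin N) ℂ := fun k => exp (((k : ℝ) * c) • M) with hf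
  have hK : IsCompact {A : Matrix (Fin N) (Fin N) ℂ | ∀ i j, A i j ∈ Metric.closedBall (0 : ℂ) 1} := by
    have h : IsCompact (Set.univ.pi fun _ : Fin N =>
        (Set.univ.pi fun _ : Fin N => Metric.closedBall (0 : ℂ) 1)) :=
      isCompact_univ_pi fun _ => isCompact_univ_pi fun _ =>
        isCompact_closedBall _ _
    suffices e : {A : Matrix (Fin N) (Fin N) ℂ | ∀ i j, A i j ∈ Metric.closedBall (0 : ℂ) 1} =
        ((Set.univ.pi fun _ : Fin N =>
        (Set.univ.pi fun _ : Fin N => Metric.closedBall (0 : ℂ) 1)) : Set (Matrix (Fin N) (Fin N) ℂ)) by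
      rw [e]; exact h
    ext A
    constructor
    · intro hA i _ j _
      exact hA i j
    · intro hA i j
      exact hA i (Set.mem_univ i) j (Set.mem_univ j)
  have hfK : ∀ k, f k ∈ {A : Matrix (Fin N) (Fin N) ℂ | ∀ i j, A i j ∈ Metric.closedBall (0 : ℂ) 1} := by
    intro k i j
    simpa [Complex.dist_eq] using entry_norm_bound_of_unitary (hunit ((k : ℝ) * c)) i j
  haveI : FirstCountableTopology (Matrix (Fin N) (Fin N) ℂ) :=
    inferInstanceAs (FirstCountableTopology (Fin N → Fin N → ℂ))
  obtain ⟨L, -, φ, hφ, hconv⟩ := hK.tendsto_subseq hfK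
  -- consecutive quotients tend to L * star L = 1
  have h1 : Filter.Tendsto (fun j => f (φ (j + 1))) Filter.atTop (nhds L) :=
    hconv.comp (Filter.tendsto_add_atTop_nat 1)
  have hstarcont : Continuous fun A : Matrix (Fin N) (Fin N) ℂ => star A :=
    continuous_star
  have h2 : Filter.Tendsto (fun j => star (f (φ j))) Filter.atTop (nhds (star L)) :=
    (hstarcont.tendsto L).comp hconv
  have hLL : L * star L = 1 := by
    have ha : Filter.Tendsto (fun j => f (φ j) * star (f (φ j))) Filter.atTop
        (nhds (L * star L)) := hconv.mul h2
    have hb : Filter.Tendsto (fun j => f (φ j) * star (f (φ j))) Filter.atTop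
        (nhds (1 : Matrix (Fin N) (Fin N) ℂ)) := by
      simp only [hf, hone]
      exact
        (tendsto_const_nhds : Filter.Tendsto (fun _ : ℕ => (1 : Matrix (Fin N) (Fin N) ℂ))
          Filter.atTop (nhds 1))
    exact tendsto_nhds_unique ha hb
  have h3 : Filter.Tendsto (fun j => f (φ (j + 1)) * star (f (φ j))) Filter.atTop
      (nhds (1 : Matrix (Fin N) (Fin N) ℂ)) := by
    rw [← hLL]; exact h1.mul h2
  -- the approximating sequence inside the semigroup
  set s : ℕ → ℝ := fun j => t + ((φ (j + 1) : ℝ) - (φ j : ℝ)) * c with hs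
  have hsnonneg : ∀ j, 0 ≤ s j := by
    intro j
    have hmono : (φ j : ℝ) + 1 ≤ (φ (j + 1) : ℝ) := by
      have := hφ (Nat.lt_succ_self j)
      exact_mod_cast Nat.succ_le_of_lt this
    have h1le : (1 : ℝ) ≤ (φ (j + 1) : ℝ) - (φ j : ℝ) := by linarith
    have : c ≤ ((φ (j + 1) : ℝ) - (φ j : ℝ)) * c := by
      nlinarith
    have ht : -t ≤ c := by
      have := abs_nonneg t
      have := neg_abs_le t
      simp only [hc]; linarith
    simp only [hs]; linarith
  have heq : ∀ j, exp (s j • M) = exp (t • M) * (f (φ (j + 1)) * star (f (φ j))) := by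
    intro j
    rw [hf]
    simp only
    rw [hstar, ← key, ← key]
    congr 1
    simp only [hs]
    ring_nf
  have htend : Filter.Tendsto (fun j => exp (s j • M)) Filter.atTop
      (nhds (exp (t • M))) := by
    have : Filter.Tendsto (fun j => exp (t • M) * (f (φ (j + 1)) * star (f (φ j))))
        Filter.atTop (nhds (exp (t • M) * 1)) := tendsto_const_nhds.mul h3
    rw [mul_one] at this
    simpa [heq] using this
  exact mem_closure_of_tendsto htend
    (Filter.Eventually.of_forall fun j => ⟨s j, hsnonneg j, rfl⟩)
end
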